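/- For all real numbers ω_c, ω_m, I, and t, the family (J_n(I)·sin((ω_c + n·ω_m)·t))_{n ∈ ℤ} is summable in ℝ with sum sin(ω_c·t + I·sin(ω_m·t)). That is, the frequency-modulated signal sin(ω_c t + I sin(ω_m t)) decomposes as a convergent series of simple sinusoids with frequencies ω_c + n·ω_m weighted by Bessel coefficients. -/

import Mathlib

open Real

/-- The Bessel function of the first kind of integer order `n`, via the
integral representation `J_n(x) = (1/π) ∫_0^π cos(n·θ − x·sin θ) dθ`. -/
noncomputable def besselJ (n : ℤ) (x : ℝ) : ℝ :=
  (1 / Real.pi) * ∫ θ in (0:ℝ)..Real.pi, Real.cos (n * θ - x * Real.sin θ)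

open Complex MeasureTheory Set intervalIntegral

noncomputable def G (x θ : ℝ) : ℂ := Complex.exp (Complex.I * x * Real.sin θ)
noncomputable def G1 (x θ : ℝ) : ℂ := G x θ * (Complex.I * x * Real.cos θ)
noncomputable def G2 (x θ : ℝ) : ℂ :=
  G x θ * ((Complex.I * x * Real.cos θ) ^ 2 - Complex.I * x * Real.sin θ)

theorem hasDerivAt_G (x θ : ℝ) : HasDerivAt (G x) (G1 x θ) θ := by
  have h1 : HasDerivAt (fun θ : ℝ => Complex.I * x * Real.sin θ)
      (Complex.I * x * Real.cos θ) θ :=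
    ((Real.hasDerivAt_sin θ).ofReal_comp).const_mul (Complex.I * x)
  have := h1.cexp
  convert this using 2 <;> simp [G, G1]

theorem hasDerivAt_G1 (x θ : ℝ) : HasDerivAt (G1 x) (G2 x θ) θ := by
  have h2 : HasDerivAt (fun θ : ℝ => Complex.I * x * Real.cos θ)
      (Complex.I * x * ((-Real.sin θ : ℝ) : ℂ)) θ :=
    ((Real.hasDerivAt_cos θ).ofReal_comp).const_mul (Complex.I * x)
  have : HasDerivAt (fun y : ℝ => G x y * (Complex.I * x * Real.cos y)) _ θ :=
    (hasDerivAt_G x θ).mul h2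
  convert this using 1
  · funext y; rfl
  simp only [G, G1, G2, Complex.ofReal_neg]
  ring

theorem continuous_G (x : ℝ) : Continuous (G x) := by
  unfold G; fun_prop

theorem continuous_G1 (x : ℝ) : Continuous (G1 x) := by
  unfold G1 G; fun_prop

theorem continuous_G2 (x : ℝ) : Continuous (G2 x) := by
  unfold G2 G; fun_prop

theorem G_two_pi (x : ℝ) : G x (2 * Real.pi) = G x 0 := by
  simp [G]

theorem G1_two_pi (x : ℝ) : G1 x (2 * Real.pi) = G1 x 0 := by
  simp [G1, G]

noncomputable def gc (x : ℝ) (n : ℤ) : ℂ := fourierCoeffOn Real.two_pi_pos (G x) n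

theorem gc_recurrence (x : ℝ) {n : ℤ} (hn : n ≠ 0) :
    gc x n = -(1 / (n : ℂ) ^ 2) * fourierCoeffOn Real.two_pi_pos (G2 x) n := by
  have step : ∀ (f f1 : ℝ → ℂ), (∀ θ, HasDerivAt f (f1 θ) θ) → Continuous f1 →
      f (2 * Real.pi) = f 0 →
      fourierCoeffOn Real.two_pi_pos f n =
        1 / (Complex.I * n) * fourierCoeffOn Real.two_pi_pos f1 n := by
    intro f f1 hderiv hcont hper
    rw [fourierCoeffOn_of_hasDerivAt Real.two_pi_pos hn (fun θ _ => hderiv θ)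
      (hcont.intervalIntegrable _ _), hper, sub_self, mul_zero, zero_sub]
    have hπ : (Real.pi : ℂ) ≠ 0 := Complex.ofReal_ne_zero.mpr Real.pi_ne_zero
    have hN : (n : ℂ) ≠ 0 := Int.cast_ne_zero.mpr hn
    push_cast
    field_simp
    ring
  rw [gc, step (G x) (G1 x) (hasDerivAt_G x) (continuous_G1 x) (G_two_pi x),
    step (G1 x) (G2 x) (hasDerivAt_G1 x) (continuous_G2 x) (G1_two_pi x)]
  have hN : (n : ℂ) ≠ 0 := Int.cast_ne_zero.mpr hn
  field_simp
  ring_nf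
  simp [Complex.I_sq]

theorem norm_fourierCoeffOn_le {g : ℝ → ℂ} {M : ℝ} (hg : ∀ θ : ℝ, ‖g θ‖ ≤ M) (n : ℤ) :
    ‖fourierCoeffOn Real.two_pi_pos g n‖ ≤ M := by
  rw [fourierCoeffOn_eq_integral]
  rw [norm_smul]
  have h1 : ‖intervalIntegral (fun θ : ℝ => fourier (-n) (θ : AddCircle (2 * Real.pi - 0)) • g θ)
      0 (2 * Real.pi) MeasureTheory.volume‖ ≤ M * |2 * Real.pi - 0| := by
    apply intervalIntegral.norm_integral_le_of_norm_le_const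
    intro θ _
    rw [norm_smul, fourier_apply]
    rw [show ‖((AddCircle.toCircle _ : Circle) : ℂ)‖ = 1 from by
      rw [Circle.norm_coe], one_mul]
    exact hg θ
  have hM : 0 ≤ M := le_trans (norm_nonneg _) (hg 0)
  calc ‖(1 / (2 * Real.pi - 0) : ℝ)‖ * ‖_‖ ≤ ‖(1 / (2 * Real.pi - 0) : ℝ)‖ * (M * |2 * Real.pi - 0|) := by
        gcongr
    _ = M := by
        have : (0:ℝ) < 2 * Real.pi - 0 := by simpa using Real.two_pi_pos
        rw [Real.norm_eq_abs, abs_of_pos (by positivity), abs_of_pos this]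
        field_simp

theorem norm_G2_le (x θ : ℝ) : ‖G2 x θ‖ ≤ |x| ^ 2 + |x| := by
  have hG : ‖G x θ‖ = 1 := by
    rw [G, Complex.norm_exp]
    simp [Complex.mul_re]
  rw [G2, norm_mul, hG, one_mul]
  refine le_trans (norm_sub_le _ _) ?_
  simp only [norm_pow, norm_mul, Complex.norm_I, one_mul, Complex.norm_real, Real.norm_eq_abs]
  have h1 : |x| * |Real.cos θ| ≤ |x| * 1 := by
    gcongr; exact Real.abs_cos_le_one θ
  have h2 : |x| * |Real.sin θ| ≤ |x| * 1 := by
    gcongr; exact Real.abs_sin_le_one θ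
  have h3 : (|x| * |Real.cos θ|) ^ 2 ≤ (|x| * 1) ^ 2 :=
    pow_le_pow_left₀ (by positivity) h1 2
  nlinarith [abs_nonneg x]

theorem summable_gc (x : ℝ) : Summable (gc x) := by
  set M : ℝ := |x| ^ 2 + |x| with hM
  have hsum : Summable (fun n : ℤ => M * (1 / (n : ℝ) ^ 2)) :=
    (Real.summable_one_div_int_pow.mpr one_lt_two).mul_left M
  apply Summable.of_norm_bounded_eventually hsum
  rw [Filter.eventually_cofinite]
  apply Set.Finite.subset (Set.finite_singleton (0 : ℤ))
  intro n hn
  simp only [Set.mem_setOf_eq, not_le] at hn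
  by_contra h0
  have hn0 : n ≠ 0 := h0
  apply absurd hn
  push_neg
  rw [gc_recurrence x hn0, norm_mul, norm_neg, norm_div, norm_one, norm_pow]
  have : ‖(n : ℂ)‖ = |(n : ℝ)| := by
    rw [← Complex.ofReal_intCast, Complex.norm_real, Real.norm_eq_abs]
  rw [this]
  have hb := norm_fourierCoeffOn_le (norm_G2_le x) n
  calc 1 / |(n:ℝ)| ^ 2 * ‖fourierCoeffOn Real.two_pi_pos (G2 x) n‖
      ≤ 1 / |(n:ℝ)| ^ 2 * M := by gcongr
    _ = M * (1 / (n:ℝ) ^ 2) := by rw [_root_.sq_abs ((n : ℝ))]; ring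

theorem integral_flip (g : ℝ → ℝ) :
    ∫ θ in (0:ℝ)..Real.pi, g (2 * Real.pi - θ) = ∫ θ in Real.pi..(2 * Real.pi), g θ := by
  rw [intervalIntegral.integral_comp_sub_left g (2 * Real.pi)]
  congr 1 <;> ring

theorem cos_integral (x : ℝ) (n : ℤ) :
    (∫ θ in (0:ℝ)..(2 * Real.pi), Real.cos (x * Real.sin θ - n * θ))
      = 2 * ∫ θ in (0:ℝ)..Real.pi, Real.cos (x * Real.sin θ - n * θ) := by
  have hc : Continuous fun θ : ℝ => Real.cos (x * Real.sin θ - n * θ) := by fun_prop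
  rw [← intervalIntegral.integral_add_adjacent_intervals (a := (0:ℝ)) (b := Real.pi)
    (c := 2 * Real.pi) (hc.intervalIntegrable _ _) (hc.intervalIntegrable _ _)]
  have key : (∫ θ in Real.pi..(2 * Real.pi), Real.cos (x * Real.sin θ - n * θ))
      = ∫ θ in (0:ℝ)..Real.pi, Real.cos (x * Real.sin θ - n * θ) := by
    rw [← integral_flip]
    apply intervalIntegral.integral_congr
    intro θ _
    have h : x * Real.sin (2 * Real.pi - θ) - n * (2 * Real.pi - θ)
        = -((x * Real.sin θ - n * θ) + n * (2 * Real.pi)) := by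
      simp [Real.sin_sub]; ring
    simp only [h, Real.cos_neg, Real.cos_add_int_mul_two_pi]
  rw [key]; ring

theorem sin_integral (x : ℝ) (n : ℤ) :
    (∫ θ in (0:ℝ)..(2 * Real.pi), Real.sin (x * Real.sin θ - n * θ)) = 0 := by
  have hc : Continuous fun θ : ℝ => Real.sin (x * Real.sin θ - n * θ) := by fun_prop
  rw [← intervalIntegral.integral_add_adjacent_intervals (a := (0:ℝ)) (b := Real.pi)
    (c := 2 * Real.pi) (hc.intervalIntegrable _ _) (hc.intervalIntegrable _ _)]
  have key : (∫ θ in Real.pi..(2 * Real.pi), Real.sin (x * Real.sin θ - n * θ))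
      = ∫ θ in (0:ℝ)..Real.pi, -Real.sin (x * Real.sin θ - n * θ) := by
    rw [← integral_flip]
    apply intervalIntegral.integral_congr
    intro θ _
    have h : x * Real.sin (2 * Real.pi - θ) - n * (2 * Real.pi - θ)
        = -((x * Real.sin θ - n * θ) + n * (2 * Real.pi)) := by
      simp [Real.sin_sub]; ring
    simp only [h, Real.sin_neg, Real.sin_add_int_mul_two_pi]
  rw [key, intervalIntegral.integral_neg]
  ring

theorem gc_eq_besselJ (x : ℝ) (n : ℤ) : gc x n = ((besselJ n x : ℝ) : ℂ) := by
  rw [gc, fourierCoeffOn_eq_integral]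
  have hint : ∀ θ : ℝ, (fourier (-n) (θ : AddCircle (2 * Real.pi - 0))) • G x θ
      = ((Real.cos (x * Real.sin θ - n * θ) : ℝ) : ℂ)
        + ((Real.sin (x * Real.sin θ - n * θ) : ℝ) : ℂ) * Complex.I := by
    intro θ
    rw [smul_eq_mul, fourier_coe_apply, G, ← Complex.exp_add]
    rw [show (2 : ℂ) * (Real.pi : ℂ) * Complex.I * ((-n : ℤ) : ℂ) * (θ : ℂ)
          / ((2 * Real.pi - 0 : ℝ) : ℂ)
        + Complex.I * (x : ℂ) * ((Real.sin θ : ℝ) : ℂ)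
        = ((x * Real.sin θ - n * θ : ℝ) : ℂ) * Complex.I from by
      have hπ : ((Real.pi : ℝ) : ℂ) ≠ 0 := Complex.ofReal_ne_zero.mpr Real.pi_ne_zero
      push_cast
      field_simp
      ring]
    rw [Complex.exp_mul_I, ← Complex.ofReal_cos, ← Complex.ofReal_sin]
  simp_rw [hint]
  have hcos : IntervalIntegrable (fun θ : ℝ => ((Real.cos (x * Real.sin θ - n * θ) : ℝ) : ℂ))
      MeasureTheory.volume 0 (2 * Real.pi) := by
    apply Continuous.intervalIntegrable; fun_prop
  have hsin : IntervalIntegrable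
      (fun θ : ℝ => ((Real.sin (x * Real.sin θ - n * θ) : ℝ) : ℂ) * Complex.I)
      MeasureTheory.volume 0 (2 * Real.pi) := by
    apply Continuous.intervalIntegrable; fun_prop
  rw [intervalIntegral.integral_add hcos hsin, intervalIntegral.integral_mul_const,
    intervalIntegral.integral_ofReal, intervalIntegral.integral_ofReal,
    cos_integral, sin_integral]
  have hA : (∫ θ in (0:ℝ)..Real.pi, Real.cos (x * Real.sin θ - n * θ))
      = ∫ θ in (0:ℝ)..Real.pi, Real.cos (n * θ - x * Real.sin θ) := by
    apply intervalIntegral.integral_congr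
    intro θ _
    show Real.cos (x * Real.sin θ - n * θ) = Real.cos (n * θ - x * Real.sin θ)
    rw [show x * Real.sin θ - n * θ = -(n * θ - x * Real.sin θ) from by ring, Real.cos_neg]
  rw [hA, besselJ]
  rw [Complex.real_smul]
  push_cast
  have hπ : ((Real.pi : ℝ) : ℂ) ≠ 0 := Complex.ofReal_ne_zero.mpr Real.pi_ne_zero
  field_simp
  ring

theorem jacobiAnger (x θ : ℝ) :
    HasSum (fun n : ℤ => ((besselJ n x : ℝ) : ℂ) * Complex.exp (Complex.I * n * θ))
      (G x θ) := by
  haveI : Fact (0 < 2 * Real.pi) := ⟨Real.two_pi_pos⟩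
  set F : C(AddCircle (2 * Real.pi), ℂ) :=
    ⟨AddCircle.liftIco (2 * Real.pi) 0 (G x),
      AddCircle.liftIco_zero_continuous (G_two_pi x).symm (continuous_G x).continuousOn⟩ with hF
  have hcoeff : ∀ n : ℤ, fourierCoeff (F : AddCircle (2 * Real.pi) → ℂ) n = gc x n := by
    intro n
    rw [hF, ContinuousMap.coe_mk, fourierCoeff_liftIco_eq, gc]
    have key : ∀ (b1 b2 : ℝ) (h1 : (0:ℝ) < b1) (h2 : (0:ℝ) < b2), b1 = b2 →
        fourierCoeffOn h1 (G x) n = fourierCoeffOn h2 (G x) n := by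
      rintro b1 b2 h1 h2 rfl; rfl
    exact key _ _ _ _ (zero_add _)
  have hsummable : Summable (fourierCoeff (F : AddCircle (2 * Real.pi) → ℂ)) :=
    (summable_gc x).congr fun n => (hcoeff n).symm
  have step := has_pointwise_sum_fourier_series_of_summable hsummable (θ : AddCircle (2 * Real.pi))
  -- identify the value F ↑θ with G x θ
  set k : ℤ := ⌊θ / (2 * Real.pi)⌋ with hk
  set y : ℝ := θ - k * (2 * Real.pi) with hy
  have hy_mem : y ∈ Set.Ico (0 : ℝ) (0 + 2 * Real.pi) := by
    rw [zero_add]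
    exact ⟨Int.sub_floor_div_mul_nonneg θ Real.two_pi_pos,
      Int.sub_floor_div_mul_lt θ Real.two_pi_pos⟩
  have hcoe : (θ : AddCircle (2 * Real.pi)) = (y : AddCircle (2 * Real.pi)) := by
    rw [QuotientAddGroup.eq_iff_sub_mem]
    refine AddSubgroup.mem_zmultiples_iff.mpr ⟨k, ?_⟩
    rw [zsmul_eq_mul, hy]
    ring
  have hval : F (θ : AddCircle (2 * Real.pi)) = G x θ := by
    rw [hcoe, hF, ContinuousMap.coe_mk, AddCircle.liftIco_coe_apply hy_mem]
    have : θ = y + k * (2 * Real.pi) := by rw [hy]; ring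
    rw [G, G, this, Real.sin_add_int_mul_two_pi]
  rw [hval] at step
  refine step.congr_fun fun n => ?_
  rw [hcoeff n, gc_eq_besselJ, smul_eq_mul, fourier_coe_apply]
  congr 1
  have hπ : ((Real.pi : ℝ) : ℂ) ≠ 0 := Complex.ofReal_ne_zero.mpr Real.pi_ne_zero
  have h2π : ((2 * Real.pi : ℝ) : ℂ) = 2 * (Real.pi : ℂ) := by push_cast; ring
  rw [h2π]
  congr 1
  rw [eq_div_iff (mul_ne_zero two_ne_zero hπ)]
  ring

/-- The FM-synthesis signal `sin(ω_c t + I sin(ω_m t))` decomposes as a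
convergent series of sinusoids with frequencies `ω_c + n ω_m` weighted by
Bessel coefficients `J_n(I)`. -/
theorem fm_bessel_expansion (ωc ωm I t : ℝ) :
    HasSum (fun n : ℤ => besselJ n I * Real.sin ((ωc + n * ωm) * t))
      (Real.sin (ωc * t + I * Real.sin (ωm * t))) := by
  have h := (jacobiAnger I (ωm * t)).mul_left (Complex.exp (Complex.I * (ωc * t)))
  have h2 := Complex.imCLM.hasSum h
  have e1 : ∀ n : ℤ, besselJ n I * Real.sin ((ωc + n * ωm) * t)
      = Complex.imCLM (Complex.exp (Complex.I * (ωc * t)) *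
        (((besselJ n I : ℝ) : ℂ) * Complex.exp (Complex.I * n * ((ωm * t : ℝ) : ℂ)))) := by
    intro n
    have e : Complex.exp (Complex.I * (ωc * t)) *
        (((besselJ n I : ℝ) : ℂ) * Complex.exp (Complex.I * n * ((ωm * t : ℝ) : ℂ)))
        = ((besselJ n I : ℝ) : ℂ) * Complex.exp ((((ωc + n * ωm) * t : ℝ) : ℂ) * Complex.I) := by
      rw [mul_comm, mul_assoc, ← Complex.exp_add]
      congr 1
      push_cast
      ring
    rw [e]
    simp only [Complex.imCLM_apply, Complex.mul_im, Complex.ofReal_re, Complex.ofReal_im,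
      Complex.exp_ofReal_mul_I_im, Complex.exp_ofReal_mul_I_re, zero_mul, add_zero]
  have e2 : Complex.imCLM (Complex.exp (Complex.I * (ωc * t)) * G I (ωm * t))
      = Real.sin (ωc * t + I * Real.sin (ωm * t)) := by
    have e : Complex.exp (Complex.I * (ωc * t)) * G I (ωm * t)
        = Complex.exp (((ωc * t + I * Real.sin (ωm * t) : ℝ) : ℂ) * Complex.I) := by
      rw [G, ← Complex.exp_add]
      congr 1
      push_cast
      ring
    rw [e]
    simp only [Complex.imCLM_apply, Complex.exp_ofReal_mul_I_im]
  rw [← e2]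
  exact h2.congr_fun e1
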